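/- Let |n_k| = max({|n_1|,...,|n_k|} ∪ {|m_1|,...,|m_k|}) with all n_i, m_i nonzero reals, and suppose ∏_{i=1}^k sinh(n_i x)/sinh(m_i x) ≡ 1. Then there exists an index j with m_j = n_k or m_j = -n_k. -/

import Mathlib

/-- If `|n i₀|` is maximal among all `|nᵢ|, |mᵢ|` (all nonzero), and
`∏ sinh(nᵢ z)/sinh(mᵢ z) ≡ 1` as meromorphic functions (i.e. wherever the
denominator is nonzero), then some `mⱼ` equals `± n i₀`. -/
theorem stmt_2 (k : ℕ) (n m : Fin k → ℝ) (i₀ : Fin k)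
    (hn : ∀ i, n i ≠ 0) (hm : ∀ i, m i ≠ 0)
    (hmax : ∀ i, |n i| ≤ |n i₀| ∧ |m i| ≤ |n i₀|)
    (hQ : ∀ z : ℂ, (∀ i, Complex.sinh ((m i : ℂ) * z) ≠ 0) →
      ∏ i, Complex.sinh ((n i : ℂ) * z) / Complex.sinh ((m i : ℂ) * z) = 1) :
    ∃ j, m j = n i₀ ∨ m j = -n i₀ := by
  by_contra hcon
  push_neg at hcon
  set z₀ : ℂ := (Real.pi : ℂ) * Complex.I / (n i₀ : ℂ) with hz₀
  have hni₀ : (n i₀ : ℂ) ≠ 0 := by exact_mod_cast hn i₀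
  have key : ∀ c : ℝ, (c : ℂ) * z₀ = ((Real.pi * (c / n i₀) : ℝ) : ℂ) * Complex.I := by
    intro c
    push_cast
    field_simp [hz₀]
    rw [hz₀, mul_assoc, div_mul_cancel₀ _ hni₀, mul_assoc]
  have hsinh : ∀ c : ℝ, Complex.sinh ((c : ℂ) * z₀)
      = ((Real.sin (Real.pi * (c / n i₀)) : ℝ) : ℂ) * Complex.I := by
    intro c
    rw [key c, Complex.sinh_mul_I, Complex.ofReal_sin]
  have hden : ∀ i, Complex.sinh ((m i : ℂ) * z₀) ≠ 0 := by
    intro i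
    rw [hsinh]
    have ht : m i / n i₀ ≠ 0 := div_ne_zero (hm i) (hn i₀)
    have ht1 : |m i / n i₀| ≤ 1 := by
      rw [abs_div, div_le_one (abs_pos.2 (hn i₀))]
      exact (hmax i).2
    have htne : m i / n i₀ ≠ 1 ∧ m i / n i₀ ≠ -1 := by
      constructor
      · intro h
        exact (hcon i).1 ((div_eq_one_iff_eq (hn i₀)).1 h)
      · intro h
        exact (hcon i).2 (by rw [div_eq_iff (hn i₀)] at h; linarith)
    have hs : Real.sin (Real.pi * (m i / n i₀)) ≠ 0 := by
      set t := m i / n i₀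
      rcases lt_or_gt_of_ne ht with h0 | h0
      · have h1 : -1 < t := lt_of_le_of_ne (neg_le_of_abs_le ht1) (Ne.symm htne.2)
        have : Real.sin (Real.pi * (-t)) > 0 := by
          apply Real.sin_pos_of_pos_of_lt_pi
          · exact mul_pos Real.pi_pos (neg_pos.2 h0)
          · nlinarith [Real.pi_pos]
        simp only [mul_neg, Real.sin_neg] at this
        linarith
      · have h1 : t < 1 := lt_of_le_of_ne (le_of_abs_le ht1) htne.1
        have : Real.sin (Real.pi * t) > 0 := by
          apply Real.sin_pos_of_pos_of_lt_pi
          · positivity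
          · nlinarith [Real.pi_pos]
        linarith
    exact mul_ne_zero (Complex.ofReal_ne_zero.2 hs) Complex.I_ne_zero
  have h1 := hQ z₀ hden
  have hzero : Complex.sinh ((n i₀ : ℂ) * z₀) = 0 := by
    rw [hsinh]
    have : n i₀ / n i₀ = 1 := div_self (hn i₀)
    rw [this, mul_one, Real.sin_pi]
    simp
  rw [Finset.prod_eq_zero (Finset.mem_univ i₀) (by rw [hzero]; simp)] at h1
  exact one_ne_zero h1.symm
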